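/- Let λ₁, λ₂, λ₃ > 0 and consider the real 3×3 matrix J = [[0, −λ₂, 0], [0, 0, −λ₃], [−λ₁, 0, 0]]. Then the characteristic polynomial of J is X³ + λ₁λ₂λ₃, the complex eigenvalues of J are exactly the three complex cube roots of −λ₁λ₂λ₃, i.e. μ_k = −(λ₁λ₂λ₃)^{1/3}·e^{2πik/3} for k ∈ {0,1,2}, and J has a complex eigenvalue with strictly positive real part (namely (λ₁λ₂λ₃)^{1/3}·e^{iπ/3}, with real part (λ₁λ₂λ₃)^{1/3}/2 > 0). Consequently the equilibrium 0 of the linearized system η′ = Jη is not asymptotically stable. -/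

import Mathlib

open Filter Polynomial

lemma spec_iff_root_aux (M : Matrix (Fin 3) (Fin 3) ℂ) (μ : ℂ) :
    μ ∈ spectrum ℂ M ↔ M.charpoly.eval μ = 0 := by
  rw [spectrum.mem_iff]
  have h1 : algebraMap ℂ (Matrix (Fin 3) (Fin 3) ℂ) μ - M
      = (Matrix.charmatrix M).map (Polynomial.eval μ) := by
    ext i j
    by_cases h : i = j
    · subst h
      simp [Matrix.charmatrix_apply_eq, Matrix.algebraMap_matrix_apply]
    · simp [Matrix.charmatrix_apply_ne _ _ _ h, Matrix.algebraMap_matrix_apply, h]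
  have h2 : M.charpoly.eval μ = (algebraMap ℂ (Matrix (Fin 3) (Fin 3) ℂ) μ - M).det := by
    rw [h1, Matrix.charpoly, ← Polynomial.coe_evalRingHom, RingHom.map_det,
      RingHom.mapMatrix_apply]
  rw [h2]
  constructor
  · intro h
    by_contra h'
    exact h ((Matrix.isUnit_iff_isUnit_det _).mpr (isUnit_iff_ne_zero.mpr h'))
  · intro h h'
    exact (isUnit_iff_ne_zero.mp ((Matrix.isUnit_iff_isUnit_det _).mp h')) h

lemma cube_root_set_aux (k : ℝ) (hk : 0 < k) (c : ℝ) (hc : 0 < c) (hc3 : c ^ 3 = k) (z : ℂ) :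
    z ^ 3 + (k:ℂ) = 0 ↔
    z ∈ Set.range (fun j : Fin 3 =>
      -((c : ℝ) : ℂ) * Complex.exp (2 * Real.pi * Complex.I * (j : ℕ) / 3)) := by
  have hcC : ((c:ℂ)) ^ 3 = (k:ℂ) := by
    rw [← hc3]; push_cast; ring
  have hcne : (c:ℂ) ≠ 0 := by exact_mod_cast hc.ne'
  constructor
  · intro h
    have hζ : IsPrimitiveRoot (Complex.exp (2 * Real.pi * Complex.I / 3)) 3 :=
      Complex.isPrimitiveRoot_exp 3 (by norm_num)
    have hw : (z / (-(c:ℂ))) ^ 3 = 1 := by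
      rw [div_pow, show (-(c:ℂ))^3 = -(k:ℂ) by rw [← hcC]; ring,
        show z ^ 3 = -(k:ℂ) by linear_combination h, div_self]
      simpa using hk.ne'
    obtain ⟨i, hi, hpow⟩ := hζ.eq_pow_of_pow_eq_one hw
    refine ⟨⟨i, hi⟩, ?_⟩
    show -(c:ℂ) * Complex.exp (2 * Real.pi * Complex.I * (i:ℕ) / 3) = z
    rw [eq_div_iff (by simpa using hcne)] at hpow
    rw [← hpow, ← Complex.exp_nat_mul]
    ring_nf
  · rintro ⟨j, rfl⟩
    have h1 : Complex.exp (2 * Real.pi * Complex.I * (j:ℕ) / 3) ^ 3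
        = Complex.exp ((j:ℕ) * (2 * Real.pi * Complex.I)) := by
      rw [← Complex.exp_nat_mul]; ring_nf
    have h2 : Complex.exp (((j:ℕ):ℂ) * (2 * Real.pi * Complex.I)) = 1 := by
      exact_mod_cast Complex.exp_int_mul_two_pi_mul_I (j:ℕ)
    rw [mul_pow, h1, h2, mul_one]
    rw [show (-(c:ℂ))^3 = -(k:ℂ) by rw [← hcC]; ring]
    ring

lemma unstable_aux (l1 l2 l3 k a b : ℝ) (hl1 : 0 < l1) (hl2 : 0 < l2) (hl3 : 0 < l3)
    (hk : k = l1 * l2 * l3) (ha : 0 < a) (hb : 0 < b)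
    (hb2 : b ^ 2 = 3 * a ^ 2) (ha3 : 8 * a ^ 3 = k)
    (J : Matrix (Fin 3) (Fin 3) ℝ)
    (hJ : J = !![0, -l2, 0; 0, 0, -l3; -l1, 0, 0]) :
    (∀ δ : ℝ, 0 < δ → ∃ η : ℝ → (Fin 3 → ℝ),
      (∀ t : ℝ, HasDerivAt η (J.mulVec (η t)) t) ∧ ‖η 0‖ < δ ∧
      ¬ Tendsto η atTop (nhds 0)) := by
  intro δ hδ
  set E : ℝ → ℝ := fun t => Real.exp (a * t) with hE
  set Co : ℝ → ℝ := fun t => Real.cos (b * t) with hCo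
  set Si : ℝ → ℝ := fun t => Real.sin (b * t) with hSi
  set y : ℝ → ℝ := fun t => E t * Co t with hy_def
  set y1 : ℝ → ℝ := fun t => E t * (a * Co t - b * Si t) with hy1_def
  set y2 : ℝ → ℝ := fun t => E t * ((a ^ 2 - b ^ 2) * Co t - 2 * a * b * Si t) with hy2_def
  have hEd : ∀ t, HasDerivAt E (E t * a) t := fun t => by
    simpa using ((hasDerivAt_id t).const_mul a).exp
  have hCod : ∀ t, HasDerivAt Co (-Si t * b) t := fun t => by
    simpa using ((hasDerivAt_id t).const_mul b).cos
  have hSid : ∀ t, HasDerivAt Si (Co t * b) t := fun t => by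
    simpa using ((hasDerivAt_id t).const_mul b).sin
  have hyd : ∀ t, HasDerivAt y (y1 t) t := by
    intro t
    have := (hEd t).mul (hCod t)
    refine this.congr_deriv ?_
    simp [hy1_def]; ring
  have hy1d : ∀ t, HasDerivAt y1 (y2 t) t := by
    intro t
    have := (hEd t).mul (((hCod t).const_mul a).sub ((hSid t).const_mul b))
    refine this.congr_deriv ?_
    simp [hy2_def]; ring
  have hy2d : ∀ t, HasDerivAt y2 (-k * y t) t := by
    intro t
    have := (hEd t).mul (((hCod t).const_mul (a ^ 2 - b ^ 2)).sub ((hSid t).const_mul (2 * a * b)))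
    refine this.congr_deriv ?_
    simp only [hy_def, Pi.sub_apply]
    linear_combination -((3 * a * E t * Co t - E t * Si t * b) * hb2 + E t * Co t * ha3)
  set M : ℝ := 1 + a / l2 + (a ^ 2 + b ^ 2) / (l2 * l3) with hM
  have hMpos : 0 < M := by positivity
  have hM1 : 1 ≤ M := by
    have h1 : 0 ≤ a / l2 := by positivity
    have h2 : 0 ≤ (a ^ 2 + b ^ 2) / (l2 * l3) := by positivity
    simp only [hM]; linarith
  set ε : ℝ := δ / (2 * M) with hε_def
  have hε : 0 < ε := by positivity
  have hεM : ε * M = δ / 2 := by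
    rw [hε_def, div_mul_eq_mul_div, div_eq_div_iff (by positivity) (by norm_num)]
    ring
  clear_value ε M y2 y1 y Si Co E
  refine ⟨fun t => ![ε * y t, -(ε / l2) * y1 t, ε / (l2 * l3) * y2 t], ?_, ?_, ?_⟩
  · intro t
    have hmv : J.mulVec (![ε * y t, -(ε / l2) * y1 t, ε / (l2 * l3) * y2 t])
        = ![-l2 * (-(ε / l2) * y1 t), -l3 * (ε / (l2 * l3) * y2 t), -l1 * (ε * y t)] := by
      subst hJ
      funext i
      fin_cases i <;>
        simp [Matrix.mulVec, dotProduct, Fin.sum_univ_three]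
    rw [hmv]
    apply hasDerivAt_pi.mpr
    intro i
    fin_cases i
    · simp only [Fin.reduceFinMk, Matrix.cons_val_zero]
      have := (hyd t).const_mul ε
      refine this.congr_deriv ?_
      field_simp
    · simp only [Fin.reduceFinMk, Matrix.cons_val_one, Matrix.head_cons, Matrix.cons_val_zero]
      have := (hy1d t).const_mul (-(ε / l2))
      refine this.congr_deriv ?_
      field_simp
    · simp only [Fin.reduceFinMk, Matrix.cons_val_two, Matrix.tail_cons, Matrix.head_cons]
      have := (hy2d t).const_mul (ε / (l2 * l3))
      refine this.congr_deriv ?_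
      field_simp [hk]
      subst hk; ring
  · have hy0 : y 0 = 1 := by simp [hy_def, hE, hCo]
    have hy10 : y1 0 = a := by simp [hy1_def, hE, hCo, hSi]
    have hy20 : y2 0 = a ^ 2 - b ^ 2 := by simp [hy2_def, hE, hCo, hSi]
    rw [pi_norm_lt_iff hδ]
    intro i
    fin_cases i
    · show ‖ε * y 0‖ < δ
      rw [hy0, mul_one, Real.norm_eq_abs, abs_of_pos hε]
      have hle : ε ≤ ε * M := by simpa using mul_le_mul_of_nonneg_left hM1 hε.le
      linarith
    · show ‖-(ε / l2) * y1 0‖ < δ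
      rw [hy10, Real.norm_eq_abs]
      have h1 : |(-(ε / l2)) * a| = ε * (a / l2) := by
        rw [abs_mul, abs_neg, abs_of_nonneg (by positivity : (0:ℝ) ≤ ε / l2),
          abs_of_nonneg ha.le]
        ring
      rw [h1]
      have h2 : a / l2 ≤ M := by
        have h3 : 0 ≤ (a ^ 2 + b ^ 2) / (l2 * l3) := by positivity
        simp only [hM]; linarith
      have : ε * (a / l2) ≤ ε * M := mul_le_mul_of_nonneg_left h2 hε.le
      linarith
    · show ‖ε / (l2 * l3) * y2 0‖ < δ
      rw [hy20, Real.norm_eq_abs]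
      have h1 : |ε / (l2 * l3) * (a ^ 2 - b ^ 2)| ≤ ε / (l2 * l3) * (a ^ 2 + b ^ 2) := by
        rw [abs_mul, abs_of_nonneg (by positivity : (0:ℝ) ≤ ε / (l2 * l3))]
        gcongr
        calc |a ^ 2 - b ^ 2| ≤ |a ^ 2| + |b ^ 2| := abs_sub _ _
          _ = a ^ 2 + b ^ 2 := by rw [abs_of_nonneg (by positivity), abs_of_nonneg (by positivity)]
      have h2 : ε / (l2 * l3) * (a ^ 2 + b ^ 2) ≤ ε * M := by
        rw [hM]
        have h3 : 0 ≤ a / l2 := by positivity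
        have h4 : ε / (l2 * l3) * (a ^ 2 + b ^ 2) = ε * ((a ^ 2 + b ^ 2) / (l2 * l3)) := by ring
        nlinarith
      linarith
  · intro h
    have h0 : Tendsto (fun t => ε * y t) atTop (nhds 0) := by
      have := ((continuous_apply (0 : Fin 3)).tendsto (0 : Fin 3 → ℝ)).comp h
      simpa [Function.comp_def] using this
    set u : ℕ → ℝ := fun n => 2 * Real.pi / b * n with hu
    have hut : Tendsto u atTop atTop :=
      Tendsto.const_mul_atTop (by positivity) tendsto_natCast_atTop_atTop
    have hcomp : Tendsto (fun n => ε * y (u n)) atTop (nhds 0) := h0.comp hut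
    have hge : ∀ n : ℕ, ε ≤ ε * y (u n) := by
      intro n
      have hco : Co (u n) = 1 := by
        simp only [hCo, hu]
        rw [show b * (2 * Real.pi / b * n) = n * (2 * Real.pi) by field_simp]
        exact Real.cos_nat_mul_two_pi n
      have hee : 1 ≤ E (u n) := by
        simp only [hE, hu]
        apply Real.one_le_exp
        positivity
      simp only [hy_def, hco, mul_one]
      nlinarith
    have : ε ≤ 0 := ge_of_tendsto' hcomp hge
    linarith

/-- The Jacobian at the origin of the reduced three-species non-transitive
competition system under the static control `u = u*`:
`J = [[0, −λ₂, 0], [0, 0, −λ₃], [−λ₁, 0, 0]]` has characteristic polynomial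
`X³ + λ₁λ₂λ₃`, its complex eigenvalues are exactly the three cube roots
`μ_k = −(λ₁λ₂λ₃)^{1/3} e^{2πik/3}`, one of them (namely
`(λ₁λ₂λ₃)^{1/3} e^{iπ/3}`) has strictly positive real part, and hence the
equilibrium `0` of `η′ = Jη` is not asymptotically stable. -/
theorem stmt9 (l1 l2 l3 : ℝ) (hl1 : 0 < l1) (hl2 : 0 < l2) (hl3 : 0 < l3)
    (J : Matrix (Fin 3) (Fin 3) ℝ)
    (hJ : J = !![0, -l2, 0; 0, 0, -l3; -l1, 0, 0]) :
    J.charpoly = X ^ 3 + C (l1 * l2 * l3) ∧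
    spectrum ℂ (J.map (fun x : ℝ => (x : ℂ))) =
      Set.range (fun k : Fin 3 =>
        -((((l1 * l2 * l3) ^ ((1 : ℝ) / 3) : ℝ) : ℂ)) *
          Complex.exp (2 * Real.pi * Complex.I * (k : ℕ) / 3)) ∧
    ((((l1 * l2 * l3) ^ ((1 : ℝ) / 3) : ℝ) : ℂ) *
        Complex.exp (Real.pi * Complex.I / 3)
      ∈ spectrum ℂ (J.map (fun x : ℝ => (x : ℂ))) ∧
      ((((l1 * l2 * l3) ^ ((1 : ℝ) / 3) : ℝ) : ℂ) *
        Complex.exp (Real.pi * Complex.I / 3)).re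
        = (l1 * l2 * l3) ^ ((1 : ℝ) / 3) / 2 ∧
      0 < ((((l1 * l2 * l3) ^ ((1 : ℝ) / 3) : ℝ) : ℂ) *
        Complex.exp (Real.pi * Complex.I / 3)).re) ∧
    (∀ δ : ℝ, 0 < δ → ∃ η : ℝ → (Fin 3 → ℝ),
      (∀ t : ℝ, HasDerivAt η (J.mulVec (η t)) t) ∧ ‖η 0‖ < δ ∧
      ¬ Tendsto η atTop (nhds 0)) := by
  have hch : J.charpoly = X ^ 3 + C (l1 * l2 * l3) := by
    subst hJ
    rw [Matrix.charpoly, Matrix.det_fin_three]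
    simp [Matrix.charmatrix_apply, Matrix.one_apply, Matrix.diagonal,
      Matrix.vecHead, Matrix.vecTail]
    ring
  have hk : 0 < l1 * l2 * l3 := by positivity
  set k : ℝ := l1 * l2 * l3 with hkdef
  set c : ℝ := k ^ ((1:ℝ)/3) with hcdef
  have hc : 0 < c := Real.rpow_pos_of_pos hk _
  have hc3 : c ^ 3 = k := by
    rw [hcdef, ← Real.rpow_natCast (k ^ ((1:ℝ)/3)) 3, ← Real.rpow_mul hk.le]
    norm_num
  -- complex characteristic polynomial
  have hchC : (J.map (fun x : ℝ => (x : ℂ))).charpoly = X ^ 3 + C (k : ℂ) := by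
    have : J.map (fun x : ℝ => (x : ℂ)) = J.map Complex.ofRealHom := rfl
    rw [this, Matrix.charpoly_map, hch]
    simp
  have hspec : ∀ z : ℂ, z ∈ spectrum ℂ (J.map (fun x : ℝ => (x : ℂ))) ↔
      z ^ 3 + (k : ℂ) = 0 := by
    intro z
    rw [spec_iff_root_aux, hchC]
    simp
  refine ⟨hch, ?_, ⟨?_, ?_, ?_⟩, ?_⟩
  · ext z
    rw [hspec z]
    exact cube_root_set_aux k hk c hc hc3 z
  · rw [hspec]
    rw [mul_pow, ← Complex.exp_nat_mul,
      show ((3:ℕ):ℂ) * (Real.pi * Complex.I / 3) = Real.pi * Complex.I by push_cast; ring,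
      Complex.exp_pi_mul_I]
    have : ((c:ℂ)) ^ 3 = (k:ℂ) := by rw [← hc3]; push_cast; ring
    rw [this]; ring
  · rw [show (Real.pi * Complex.I / 3 : ℂ) = ((Real.pi/3 : ℝ) : ℂ) * Complex.I by
      push_cast; ring]
    rw [Complex.re_ofReal_mul, Complex.exp_ofReal_mul_I_re, Real.cos_pi_div_three]
    ring
  · rw [show (Real.pi * Complex.I / 3 : ℂ) = ((Real.pi/3 : ℝ) : ℂ) * Complex.I by
      push_cast; ring]
    rw [Complex.re_ofReal_mul, Complex.exp_ofReal_mul_I_re, Real.cos_pi_div_three]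
    positivity
  · refine unstable_aux l1 l2 l3 k (c/2) (Real.sqrt 3 * (c/2)) hl1 hl2 hl3 rfl
      (by positivity) (by positivity) ?_ ?_ J hJ
    · rw [mul_pow, Real.sq_sqrt (by norm_num : (0:ℝ) ≤ 3)]
    · rw [show 8 * (c/2) ^ 3 = c ^ 3 by ring, hc3]
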